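/- Let u_ε be a positive bounded solution of (1/ε^m)(J_ε⋆u_ε − u_ε) + u_ε(a(x) − u_ε) = 0 in ℝ^N, where a ∈ C¹(ℝ^N) is bounded with a⁺ of compact support and a⁺ ≢ 0, and J_ε(z) = ε^{−N}J(z/ε). Then u_ε ≤ M := ‖a‖_∞, ∫_{ℝ^N} u_ε² dx ≤ M ∫ a⁺ dx, and (1/(2ε^m)) ∬ J_ε(x−y)(u_ε(x)−u_ε(y))² dx dy ≤ 4M² ∫ a⁺ dx. -/

import Mathlib

open MeasureTheory Real

noncomputable section

set_option maxHeartbeats 2000000 in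
theorem stmt_10 (N : ℕ) (m ε : ℝ) (hm : 0 ≤ m) (hε : 0 < ε)
    (J a u : EuclideanSpace ℝ (Fin N) → ℝ)
    (hJc : Continuous J) (hJpos : ∀ z, 0 ≤ J z) (hJsym : ∀ z, J (-z) = J z)
    (hJint : Integrable J) (hJmass : ∫ z, J z = 1) (hJ0 : 0 < J 0)
    (hJsupp : Function.support J ⊆ Metric.closedBall 0 1)
    (hac : ContDiff ℝ 1 a) (habd : ∃ C, ∀ x, |a x| ≤ C)
    (haplus_cs : HasCompactSupport (fun x => max (a x) 0))
    (haplus_ne : ¬ ∀ x, max (a x) 0 = 0)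
    (Jε : EuclideanSpace ℝ (Fin N) → ℝ)
    (hJε : ∀ z, Jε z = (ε ^ N)⁻¹ * J (ε⁻¹ • z))
    (hupos : ∀ x, 0 < u x) (hubd : ∃ C, ∀ x, u x ≤ C)
    (huint : Integrable u) (hu2int : Integrable (fun x => (u x) ^ 2))
    (heq : ∀ x, (1 / ε ^ m) * ((∫ y, Jε (x - y) * u y) - u x) + u x * (a x - u x) = 0)
    (M : ℝ) (hM : M = ⨆ x, |a x|) :
    (∀ x, u x ≤ M) ∧
    (∫ x, (u x) ^ 2) ≤ M * ∫ x, max (a x) 0 ∧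
    (1 / (2 * ε ^ m)) * ∫ x, ∫ y, Jε (x - y) * (u x - u y) ^ 2
      ≤ 4 * M ^ 2 * ∫ x, max (a x) 0 := by
  obtain ⟨C, hC⟩ := hubd
  -- basic facts about M
  have habdd : BddAbove (Set.range fun x : (EuclideanSpace ℝ (Fin N)) => |a x|) := by
    obtain ⟨C', hC'⟩ := habd
    exact ⟨C', by rintro _ ⟨x, rfl⟩; exact hC' x⟩
  have hMa : ∀ x, |a x| ≤ M := by
    intro x; rw [hM]; exact le_ciSup habdd x
  have hM0 : (0:ℝ) ≤ M := (abs_nonneg _).trans (hMa 0)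
  have haM : ∀ x, a x ≤ M := fun x => (le_abs_self _).trans (hMa x)
  -- ε powers
  have hεm : (0:ℝ) < ε ^ m := rpow_pos_of_pos hε m
  -- Jε facts
  have hJεfun : Jε = fun z => (ε ^ N)⁻¹ * J (ε⁻¹ • z) := funext hJε
  have hJεpos : ∀ z, 0 ≤ Jε z := by
    intro z; rw [hJε]
    exact mul_nonneg (inv_nonneg.2 (pow_nonneg hε.le _)) (hJpos _)
  have hJεint : Integrable Jε := by
    rw [hJεfun]
    exact ((integrable_comp_smul_iff volume J (inv_ne_zero hε.ne')).2 hJint).const_mul _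
  have hJεmass : ∫ z, Jε z = 1 := by
    rw [hJεfun, MeasureTheory.integral_const_mul,
      MeasureTheory.Measure.integral_comp_inv_smul volume J ε]
    simp only [finrank_euclideanSpace, Fintype.card_fin, smul_eq_mul, hJmass, mul_one]
    rw [abs_of_nonneg (pow_nonneg hε.le _)]
    exact inv_mul_cancel₀ (pow_ne_zero _ hε.ne')
  have hJεc : Continuous Jε := by
    rw [hJεfun]
    exact continuous_const.mul (hJc.comp (continuous_const_smul _))
  have hJεsym : ∀ z : (EuclideanSpace ℝ (Fin N)), Jε (-z) = Jε z := by
    intro z; rw [hJε, hJε, smul_neg, hJsym]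
  -- translated kernel
  have hJεxint : ∀ x : (EuclideanSpace ℝ (Fin N)), Integrable (fun y => Jε (x - y)) := fun x =>
    hJεint.comp_sub_left x
  have hJεxmass : ∀ x : (EuclideanSpace ℝ (Fin N)), ∫ y, Jε (x - y) = 1 := fun x => by
    rw [integral_sub_left_eq_self Jε volume x]; exact hJεmass
  have hJεymass : ∀ y : (EuclideanSpace ℝ (Fin N)), ∫ x, Jε (x - y) = 1 := fun y => by
    rw [integral_sub_right_eq_self Jε y]; exact hJεmass
  have humeas : AEStronglyMeasurable u (volume : Measure (EuclideanSpace ℝ (Fin N))) := huint.1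
  have hubound : ∃ C0, ∀ x : (EuclideanSpace ℝ (Fin N)), ‖u x‖ ≤ C0 :=
    ⟨C, fun x => by rw [Real.norm_eq_abs, abs_of_pos (hupos x)]; exact hC x⟩
  -- integrability of y ↦ Jε (x - y) * u y
  have huJint : ∀ x : (EuclideanSpace ℝ (Fin N)), Integrable (fun y => Jε (x - y) * u y) := by
    intro x
    have := (hJεxint x).bdd_mul humeas (Filter.Eventually.of_forall hubound.choose_spec)
    exact this.congr (Filter.Eventually.of_forall fun y => mul_comm _ _)
  -- supremum of u
  set S := sSup (Set.range u) with hS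
  have hSbdd : BddAbove (Set.range u) := ⟨C, by rintro _ ⟨x, rfl⟩; exact hC x⟩
  have hus : ∀ x, u x ≤ S := fun x => le_csSup hSbdd (Set.mem_range_self x)
  have hS0 : 0 < S := (hupos 0).trans_le (hus 0)
  -- bound of the convolution
  have hconv_le : ∀ x : (EuclideanSpace ℝ (Fin N)), (∫ y, Jε (x - y) * u y) ≤ S := by
    intro x
    have h1 : (∫ y, Jε (x - y) * u y) ≤ ∫ y, Jε (x - y) * S := by
      refine integral_mono (huJint x) ((hJεxint x).mul_const S) fun y => ?_
      exact mul_le_mul_of_nonneg_left (hus y) (hJεpos _)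
    have h2 : (∫ y, Jε (x - y) * S) = S := by
      rw [MeasureTheory.integral_mul_const, hJεxmass x, one_mul]
    linarith
  -- equation rearranged
  have heq' : ∀ x : (EuclideanSpace ℝ (Fin N)), (∫ y, Jε (x - y) * u y) - u x = ε ^ m * (u x ^ 2 - a x * u x) := by
    intro x
    have h := heq x
    have h2 : (1 / ε ^ m) * ((∫ y, Jε (x - y) * u y) - u x) = u x ^ 2 - a x * u x := by
      nlinarith [h]
    field_simp at h2
    linarith [h2]
  ---- Part 1
  have part1 : ∀ x, u x ≤ M := by
    by_contra hcon
    push_neg at hcon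
    obtain ⟨x₀, hx₀⟩ := hcon
    have hSM : M < S := hx₀.trans_le (hus x₀)
    set c := (S / 2) * ((S - M) / 2) with hc
    have hc0 : 0 < c := by
      apply mul_pos <;> linarith
    set δ := min ((S - M) / 2) (c * ε ^ m / 2) with hδ
    have hδ0 : 0 < δ := lt_min (by linarith) (by positivity)
    obtain ⟨_, ⟨x, rfl⟩, hx⟩ := exists_lt_of_lt_csSup ⟨u 0, Set.mem_range_self 0⟩
      (show S - δ < S by linarith)
    -- u x > S - δ
    have h1 : (∫ y, Jε (x - y) * u y) - u x ≤ δ := by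
      have := hconv_le x
      have := hus x
      linarith
    have hδ1 : δ ≤ (S - M) / 2 := min_le_left _ _
    have hδ2 : δ ≤ c * ε ^ m / 2 := min_le_right _ _
    have hux1 : S / 2 ≤ u x := by linarith
    have hux2 : (S - M) / 2 ≤ u x - a x := by
      have := haM x; linarith
    have hlow : c ≤ u x ^ 2 - a x * u x := by
      have : c ≤ u x * (u x - a x) :=
        mul_le_mul hux1 hux2 (by linarith) (by linarith)
      nlinarith
    have := heq' x
    nlinarith
  ---- shared integrability facts
  have haplusc : Continuous (fun x : (EuclideanSpace ℝ (Fin N)) => max (a x) 0) :=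
    hac.continuous.max continuous_const
  have haplusint : Integrable (fun x : (EuclideanSpace ℝ (Fin N)) => max (a x) 0) :=
    haplusc.integrable_of_hasCompactSupport haplus_cs
  have haplus_nonneg : (0:ℝ) ≤ ∫ x, max (a x) 0 :=
    integral_nonneg fun x => le_max_right _ _
  have hameas : AEStronglyMeasurable a (volume : Measure (EuclideanSpace ℝ (Fin N))) :=
    hac.continuous.aestronglyMeasurable
  have habound : ∃ C0, ∀ x : (EuclideanSpace ℝ (Fin N)), ‖a x‖ ≤ C0 := ⟨M, fun x => hMa x⟩
  have hauint : Integrable (fun x => a x * u x) := huint.bdd_mul hameas (Filter.Eventually.of_forall habound.choose_spec)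
  have hau2int : Integrable (fun x => a x * u x ^ 2) := hu2int.bdd_mul hameas (Filter.Eventually.of_forall habound.choose_spec)
  have hu3int : Integrable (fun x => u x * u x ^ 2) := hu2int.bdd_mul humeas (Filter.Eventually.of_forall hubound.choose_spec)
  -- product integrability machinery
  have hkermeas : AEStronglyMeasurable (fun p : (EuclideanSpace ℝ (Fin N)) × (EuclideanSpace ℝ (Fin N)) => Jε (p.1 - p.2))
      ((volume : Measure (EuclideanSpace ℝ (Fin N))).prod volume) :=
    (hJεc.comp (continuous_fst.sub continuous_snd)).aestronglyMeasurable
  have key : ∀ g : (EuclideanSpace ℝ (Fin N)) → ℝ, Integrable g →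
      Integrable (fun p : (EuclideanSpace ℝ (Fin N)) × (EuclideanSpace ℝ (Fin N)) => Jε (p.1 - p.2) * g p.2)
        ((volume : Measure (EuclideanSpace ℝ (Fin N))).prod volume) := by
    intro g hg
    have hmeas : AEStronglyMeasurable (fun p : (EuclideanSpace ℝ (Fin N)) × (EuclideanSpace ℝ (Fin N)) => Jε (p.1 - p.2) * g p.2)
        ((volume : Measure (EuclideanSpace ℝ (Fin N))).prod volume) := by
      exact hkermeas.mul
        (hg.1.comp_quasiMeasurePreserving Measure.quasiMeasurePreserving_snd)
    rw [integrable_prod_iff' hmeas]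
    constructor
    · exact Filter.Eventually.of_forall fun y =>
        (hJεint.comp_sub_right y).mul_const (g y)
    · have : (fun y : (EuclideanSpace ℝ (Fin N)) => ∫ x, ‖Jε (x - y) * g y‖) = fun y => ‖g y‖ := by
        funext y
        have : ∀ x : (EuclideanSpace ℝ (Fin N)), ‖Jε (x - y) * g y‖ = Jε (x - y) * ‖g y‖ := by
          intro x
          rw [norm_mul, Real.norm_eq_abs (Jε _), abs_of_nonneg (hJεpos _)]
        simp_rw [this]
        rw [MeasureTheory.integral_mul_const, hJεymass y, one_mul]
      rw [this]
      exact hg.norm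
  have hFu := key u huint
  have hFu2 := key (fun x => u x ^ 2) hu2int
  -- swapped version : Jε (x-y) * u x ^ 2 integrable
  have hGu2 : Integrable (fun p : (EuclideanSpace ℝ (Fin N)) × (EuclideanSpace ℝ (Fin N)) => Jε (p.1 - p.2) * u p.1 ^ 2)
      ((volume : Measure (EuclideanSpace ℝ (Fin N))).prod volume) := by
    have := hFu2.swap
    refine this.congr (Filter.Eventually.of_forall fun p => ?_)
    show Jε (p.2 - p.1) * u p.1 ^ 2 = Jε (p.1 - p.2) * u p.1 ^ 2
    rw [← neg_sub p.1 p.2, hJεsym]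
  -- cross term
  have hcross : Integrable (fun p : (EuclideanSpace ℝ (Fin N)) × (EuclideanSpace ℝ (Fin N)) => u p.1 * (Jε (p.1 - p.2) * u p.2))
      ((volume : Measure (EuclideanSpace ℝ (Fin N))).prod volume) := by
    refine hFu.bdd_mul (c := hubound.choose) ?_ ?_
    · exact humeas.comp_quasiMeasurePreserving Measure.quasiMeasurePreserving_fst
    · exact Filter.Eventually.of_forall fun p => hubound.choose_spec p.1
  ---- Part 2 : integrate the equation
  have hconvint : Integrable (fun x => ∫ y, Jε (x - y) * u y) := by
    have : (fun x : (EuclideanSpace ℝ (Fin N)) => ∫ y, Jε (x - y) * u y)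
        = fun x => u x + ε ^ m * (u x ^ 2 - a x * u x) := by
      funext x; have := heq' x; linarith
    rw [this]
    exact huint.add ((hu2int.sub hauint).const_mul _)
  have hintconv : ∫ x, ∫ y, Jε (x - y) * u y = ∫ x, u x := by
    rw [MeasureTheory.integral_integral hFu, integral_prod_symm _ hFu]
    congr 1
    funext y
    show (∫ x : EuclideanSpace ℝ (Fin N), Jε (x - y) * u y) = u y
    rw [MeasureTheory.integral_mul_const, hJεymass y, one_mul]
  have hint0 : ∫ x, (u x ^ 2 - a x * u x) = 0 := by
    have h1 : ∫ x, ((∫ y, Jε (x - y) * u y) - u x) = 0 := by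
      rw [integral_sub hconvint huint, hintconv, sub_self]
    have h2 : ∫ x, ((∫ y, Jε (x - y) * u y) - u x)
        = ∫ x, ε ^ m * (u x ^ 2 - a x * u x) := by
      congr 1; funext x; exact heq' x
    rw [h2, MeasureTheory.integral_const_mul] at h1
    rcases mul_eq_zero.1 h1 with h | h
    · exact absurd h hεm.ne'
    · exact h
  have hu2eq : ∫ x, u x ^ 2 = ∫ x, a x * u x := by
    have := integral_sub hu2int hauint
    rw [hint0] at this
    linarith [this]
  have part2 : (∫ x, (u x) ^ 2) ≤ M * ∫ x, max (a x) 0 := by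
    rw [hu2eq]
    have hstep1 : ∫ x, a x * u x ≤ ∫ x, max (a x) 0 * M := by
      refine integral_mono hauint (haplusint.mul_const M) fun x => ?_
      have h1 : a x * u x ≤ max (a x) 0 * u x :=
        mul_le_mul_of_nonneg_right (le_max_left _ _) (hupos x).le
      have h2 : max (a x) 0 * u x ≤ max (a x) 0 * M :=
        mul_le_mul_of_nonneg_left (part1 x) (le_max_right _ _)
      linarith
    rw [MeasureTheory.integral_mul_const] at hstep1
    linarith
  ---- Part 3
  -- integrability of the big kernels
  have hG : Integrable (fun p : (EuclideanSpace ℝ (Fin N)) × (EuclideanSpace ℝ (Fin N)) => Jε (p.1 - p.2) * (u p.1 - u p.2) ^ 2)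
      ((volume : Measure (EuclideanSpace ℝ (Fin N))).prod volume) := by
    have h := (hGu2.sub (hcross.const_mul 2)).add hFu2
    refine h.congr (Filter.Eventually.of_forall fun p => ?_)
    show Jε (p.1 - p.2) * u p.1 ^ 2 - 2 * (u p.1 * (Jε (p.1 - p.2) * u p.2))
        + Jε (p.1 - p.2) * u p.2 ^ 2 = Jε (p.1 - p.2) * (u p.1 - u p.2) ^ 2
    ring
  have hK : Integrable (fun p : (EuclideanSpace ℝ (Fin N)) × (EuclideanSpace ℝ (Fin N)) => Jε (p.1 - p.2) * (u p.1 - u p.2) * u p.1)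
      ((volume : Measure (EuclideanSpace ℝ (Fin N))).prod volume) := by
    have h := hGu2.sub hcross
    refine h.congr (Filter.Eventually.of_forall fun p => ?_)
    show Jε (p.1 - p.2) * u p.1 ^ 2 - u p.1 * (Jε (p.1 - p.2) * u p.2)
        = Jε (p.1 - p.2) * (u p.1 - u p.2) * u p.1
    ring
  -- compute ∫ K
  have hKval : (∫ p : (EuclideanSpace ℝ (Fin N)) × (EuclideanSpace ℝ (Fin N)), Jε (p.1 - p.2) * (u p.1 - u p.2) * u p.1
        ∂((volume : Measure (EuclideanSpace ℝ (Fin N))).prod volume))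
      = ε ^ m * ∫ x, (a x * u x ^ 2 - u x * u x ^ 2) := by
    rw [integral_prod _ hK]
    have hinner : ∀ x : (EuclideanSpace ℝ (Fin N)), (∫ y, Jε (x - y) * (u x - u y) * u x)
        = ε ^ m * (a x * u x ^ 2 - u x * u x ^ 2) := by
      intro x
      have h1 : (fun y => Jε (x - y) * (u x - u y) * u x)
          = fun y => (u x * u x) * Jε (x - y) - u x * (Jε (x - y) * u y) := by
        funext y; ring
      rw [h1, integral_sub (((hJεxint x).const_mul _)) ((huJint x).const_mul _),
        MeasureTheory.integral_const_mul, MeasureTheory.integral_const_mul, hJεxmass x,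
        mul_one]
      have h2 := heq' x
      linear_combination (-u x) * h2
    have hclean : (∫ x, ∫ y, Jε (x - y) * (u x - u y) * u x)
        = ε ^ m * ∫ x, (a x * u x ^ 2 - u x * u x ^ 2) := by
      calc ∫ x, ∫ y, Jε (x - y) * (u x - u y) * u x
          = ∫ x, ε ^ m * (a x * u x ^ 2 - u x * u x ^ 2) := by
            congr 1; funext x; exact hinner x
        _ = ε ^ m * ∫ x, (a x * u x ^ 2 - u x * u x ^ 2) := by
            rw [MeasureTheory.integral_const_mul]
    exact hclean
  -- symmetrization
  have hKswap : Integrable (fun p : (EuclideanSpace ℝ (Fin N)) × (EuclideanSpace ℝ (Fin N)) => Jε (p.1 - p.2) * (u p.2 - u p.1) * u p.2)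
      ((volume : Measure (EuclideanSpace ℝ (Fin N))).prod volume) := by
    have := hK.swap
    refine this.congr (Filter.Eventually.of_forall fun p => ?_)
    show Jε (p.2 - p.1) * (u p.2 - u p.1) * u p.2
        = Jε (p.1 - p.2) * (u p.2 - u p.1) * u p.2
    rw [← neg_sub p.1 p.2, hJεsym]
  have hswapeq : (∫ p : (EuclideanSpace ℝ (Fin N)) × (EuclideanSpace ℝ (Fin N)), Jε (p.1 - p.2) * (u p.2 - u p.1) * u p.2
        ∂((volume : Measure (EuclideanSpace ℝ (Fin N))).prod volume))
      = ∫ p : (EuclideanSpace ℝ (Fin N)) × (EuclideanSpace ℝ (Fin N)), Jε (p.1 - p.2) * (u p.1 - u p.2) * u p.1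
        ∂((volume : Measure (EuclideanSpace ℝ (Fin N))).prod volume) := by
    rw [← MeasureTheory.integral_prod_swap]
    congr 1
    funext p
    show Jε (p.2 - p.1) * (u p.1 - u p.2) * u p.1
        = Jε (p.1 - p.2) * (u p.1 - u p.2) * u p.1
    rw [← neg_sub p.1 p.2, hJεsym]
  have hGval : (∫ p : (EuclideanSpace ℝ (Fin N)) × (EuclideanSpace ℝ (Fin N)), Jε (p.1 - p.2) * (u p.1 - u p.2) ^ 2
        ∂((volume : Measure (EuclideanSpace ℝ (Fin N))).prod volume))
      = 2 * (ε ^ m * ∫ x, (a x * u x ^ 2 - u x * u x ^ 2)) := by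
    have hsum : (∫ p : (EuclideanSpace ℝ (Fin N)) × (EuclideanSpace ℝ (Fin N)), (Jε (p.1 - p.2) * (u p.1 - u p.2) * u p.1
          + Jε (p.1 - p.2) * (u p.2 - u p.1) * u p.2)
          ∂((volume : Measure (EuclideanSpace ℝ (Fin N))).prod volume))
        = 2 * (ε ^ m * ∫ x, (a x * u x ^ 2 - u x * u x ^ 2)) := by
      rw [integral_add hK hKswap, hswapeq, hKval]; ring
    rw [← hsum]
    congr 1
    funext p
    show Jε (p.1 - p.2) * (u p.1 - u p.2) ^ 2
        = Jε (p.1 - p.2) * (u p.1 - u p.2) * u p.1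
          + Jε (p.1 - p.2) * (u p.2 - u p.1) * u p.2
    ring
  have hiter : (∫ x, ∫ y, Jε (x - y) * (u x - u y) ^ 2)
      = 2 * (ε ^ m * ∫ x, (a x * u x ^ 2 - u x * u x ^ 2)) := by
    rw [MeasureTheory.integral_integral hG]
    exact hGval
  -- final bound
  have hbound : (∫ x, (a x * u x ^ 2 - u x * u x ^ 2)) ≤ M ^ 2 * ∫ x, max (a x) 0 := by
    have hstep1 : (∫ x, (a x * u x ^ 2 - u x * u x ^ 2)) ≤ ∫ x, max (a x) 0 * M ^ 2 := by
      refine integral_mono (hau2int.sub hu3int) (haplusint.mul_const _) fun x => ?_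
      have h1 : a x * u x ^ 2 ≤ max (a x) 0 * u x ^ 2 :=
        mul_le_mul_of_nonneg_right (le_max_left _ _) (sq_nonneg _)
      have h2 : max (a x) 0 * u x ^ 2 ≤ max (a x) 0 * M ^ 2 := by
        apply mul_le_mul_of_nonneg_left _ (le_max_right _ _)
        have := part1 x
        have := (hupos x).le
        nlinarith
      have h3 : 0 ≤ u x * u x ^ 2 := mul_nonneg (hupos x).le (sq_nonneg _)
      linarith
    rw [MeasureTheory.integral_mul_const] at hstep1
    linarith
  refine ⟨part1, part2, ?_⟩
  rw [hiter]
  have h2εm : (0:ℝ) < 2 * ε ^ m := by linarith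
  rw [div_mul_eq_mul_div, one_mul]
  rw [div_le_iff₀ h2εm]
  have hMsq : (0:ℝ) ≤ M ^ 2 * ∫ x, max (a x) 0 :=
    mul_nonneg (sq_nonneg _) haplus_nonneg
  calc 2 * (ε ^ m * ∫ x, (a x * u x ^ 2 - u x * u x ^ 2))
      ≤ 2 * (ε ^ m * (M ^ 2 * ∫ x, max (a x) 0)) := by
        apply mul_le_mul_of_nonneg_left _ (by norm_num)
        exact mul_le_mul_of_nonneg_left hbound hεm.le
    _ ≤ 4 * M ^ 2 * (∫ x, max (a x) 0) * (2 * ε ^ m) := by nlinarith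
  done
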